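/- Let A, B, C, D be pairwise distinct points of ℝ² lying on a circle with center O and radius r > 0, and let ℓ be a line containing none of A, B, C, D. Suppose some conic G through A, B, C, D, given by a polynomial not proportional to (x − O₁)² + (y − O₂)² − r², meets ℓ in exactly two points P ≠ Q with dist(O, P) = dist(O, Q), and let M = (P + Q)/2. Then every conic through A, B, C, D meets ℓ either in the empty set, or exactly in {M}, or exactly in a pair of distinct points whose midpoint is M. -/

import Mathlib

/-- A conic (possibly degenerate) in the affine plane `ℝ × ℝ`, given by the six
coefficients of a polynomial `a·x² + b·x·y + c·y² + d·x + e·y + g`. -/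
structure Conic where
  a : ℝ
  b : ℝ
  c : ℝ
  d : ℝ
  e : ℝ
  g : ℝ

/-- Evaluation of the defining polynomial of a conic at a point of `ℝ × ℝ`. -/
def Conic.eval (f : Conic) (p : ℝ × ℝ) : ℝ :=
  f.a * p.1 ^ 2 + f.b * p.1 * p.2 + f.c * p.2 ^ 2 + f.d * p.1 + f.e * p.2 + f.g

/-- The defining polynomial is nonzero. -/
def Conic.Nonzero (f : Conic) : Prop :=
  ¬ (f.a = 0 ∧ f.b = 0 ∧ f.c = 0 ∧ f.d = 0 ∧ f.e = 0 ∧ f.g = 0)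

/-- The conic passes through the four points `A`, `B`, `C`, `D`. -/
def Conic.Through (f : Conic) (A B C D : ℝ × ℝ) : Prop :=
  f.eval A = 0 ∧ f.eval B = 0 ∧ f.eval C = 0 ∧ f.eval D = 0

/-- No three of the four points `A`, `B`, `C`, `D` are collinear. -/
def NoThreeCollinear (A B C D : ℝ × ℝ) : Prop :=
  ¬ Collinear ℝ ({A, B, C} : Set (ℝ × ℝ)) ∧ ¬ Collinear ℝ ({A, B, D} : Set (ℝ × ℝ)) ∧
  ¬ Collinear ℝ ({A, C, D} : Set (ℝ × ℝ)) ∧ ¬ Collinear ℝ ({B, C, D} : Set (ℝ × ℝ))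

/-- The line through `M` with direction `u`. -/
def parmLine (M u : ℝ × ℝ) : Set (ℝ × ℝ) :=
  {p | ∃ t : ℝ, p = M + t • u}

/-- The polynomial `(x − O₁)² + (y − O₂)² − r²` of the circle with center `O` and
radius `r`, as a conic. -/
def circleConic (O : ℝ × ℝ) (r : ℝ) : Conic :=
  ⟨1, 0, 1, -2 * O.1, -2 * O.2, O.1 ^ 2 + O.2 ^ 2 - r ^ 2⟩

/-- The polynomial of `f` is proportional to that of `h`. -/
def Conic.PropTo (f h : Conic) : Prop :=
  ∃ k : ℝ, f.a = k * h.a ∧ f.b = k * h.b ∧ f.c = k * h.c ∧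
    f.d = k * h.d ∧ f.e = k * h.e ∧ f.g = k * h.g

/-- `P` lies on the circle with center `O` and radius `r`. -/
def OnCircle (P O : ℝ × ℝ) (r : ℝ) : Prop :=
  (P.1 - O.1) ^ 2 + (P.2 - O.2) ^ 2 = r ^ 2

def Conic.qf (k : Conic) (v : ℝ × ℝ) : ℝ := k.a * v.1^2 + k.b * v.1 * v.2 + k.c * v.2^2
def Conic.bf (k : Conic) (v w : ℝ × ℝ) : ℝ := 2*k.a*v.1*w.1 + k.b*(v.1*w.2 + v.2*w.1) + 2*k.c*v.2*w.2
def Conic.lf (k : Conic) (P v : ℝ × ℝ) : ℝ := 2*k.a*P.1*v.1 + k.b*(P.1*v.2 + P.2*v.1) + 2*k.c*P.2*v.2 + k.d*v.1 + k.e*v.2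
def detp (X Y Z : ℝ × ℝ) : ℝ := (Y.1 - X.1) * (Z.2 - X.2) - (Y.2 - X.2) * (Z.1 - X.1)

lemma exp2 (k : Conic) (P v w : ℝ × ℝ) (t s : ℝ) :
    k.eval (P + t • v + s • w) = k.qf v * t^2 + k.bf v w * (t*s) + k.qf w * s^2
      + k.lf P v * t + k.lf P w * s + k.eval P := by
  simp [Conic.eval, Conic.qf, Conic.bf, Conic.lf, Prod.fst_add, Prod.snd_add,
    Prod.smul_fst, Prod.smul_snd, smul_eq_mul]
  ring

lemma exp1 (k : Conic) (P v : ℝ × ℝ) (t : ℝ) :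
    k.eval (P + t • v) = k.qf v * t^2 + k.lf P v * t + k.eval P := by
  simpa using exp2 k P v v t 0

lemma nsq_pos {u : ℝ × ℝ} (hu : u ≠ 0) : 0 < u.1^2 + u.2^2 := by
  rcases (by simpa [Prod.ext_iff] using hu : ¬ (u.1 = 0 ∧ u.2 = 0)) with h
  rcases eq_or_ne u.1 0 with h1 | h1
  · have h2 : u.2 ≠ 0 := by tauto
    nlinarith [sq_nonneg u.1, sq_pos_of_ne_zero h2]
  · nlinarith [sq_nonneg u.2, sq_pos_of_ne_zero h1]

lemma factor_line (k : Conic) (V u : ℝ × ℝ) (hu : u ≠ 0)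
    (h0 : k.qf u = 0) (h1 : k.lf V u = 0) (h2 : k.eval V = 0) :
    ∃ α β γ : ℝ, ∀ p : ℝ × ℝ,
      k.eval p = (u.1 * (p.2 - V.2) - u.2 * (p.1 - V.1)) * (α * p.1 + β * p.2 + γ) := by
  have hn := nsq_pos hu
  set n := u.1^2 + u.2^2 with hndef
  have hn0 : n ≠ 0 := ne_of_gt hn
  set w : ℝ × ℝ := (-u.2, u.1) with hw
  have key : ∀ p : ℝ × ℝ, n^2 * k.eval p =
      (u.1 * (p.2 - V.2) - u.2 * (p.1 - V.1)) *
        (k.bf u w * (u.1 * (p.1 - V.1) + u.2 * (p.2 - V.2))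
          + k.qf w * (u.1 * (p.2 - V.2) - u.2 * (p.1 - V.1)) + k.lf V w * n) := by
    intro p
    have hp : p = V + ((u.1 * (p.1 - V.1) + u.2 * (p.2 - V.2))/n) • u
        + ((u.1 * (p.2 - V.2) - u.2 * (p.1 - V.1))/n) • w := by
      apply Prod.ext <;> (simp [hw, Prod.fst_add, Prod.snd_add, Prod.smul_fst, Prod.smul_snd, smul_eq_mul]; field_simp; ring)
    rw [show k.eval p = k.eval (V + ((u.1 * (p.1 - V.1) + u.2 * (p.2 - V.2))/n) • u
        + ((u.1 * (p.2 - V.2) - u.2 * (p.1 - V.1))/n) • w) from by rw [← hp]]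
    rw [exp2, h0, h1, h2]
    field_simp
    ring
  refine ⟨(k.bf u w * u.1 - k.qf w * u.2)/n^2, (k.bf u w * u.2 + k.qf w * u.1)/n^2,
    (k.lf V w * n - k.bf u w * (u.1*V.1 + u.2*V.2) - k.qf w * (u.1*V.2 - u.2*V.1))/n^2, fun p => ?_⟩
  have hk := key p
  field_simp
  linear_combination hk
lemma quad3 {α β γ t1 t2 t3 : ℝ} (h12 : t1 ≠ t2) (h13 : t1 ≠ t3) (h23 : t2 ≠ t3)
    (e1 : α * t1^2 + β * t1 + γ = 0) (e2 : α * t2^2 + β * t2 + γ = 0)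
    (e3 : α * t3^2 + β * t3 + γ = 0) : α = 0 ∧ β = 0 ∧ γ = 0 := by
  have r12 : α * (t1 + t2) + β = 0 := by
    apply mul_left_cancel₀ (sub_ne_zero.mpr h12)
    linear_combination e1 - e2
  have r13 : α * (t1 + t3) + β = 0 := by
    apply mul_left_cancel₀ (sub_ne_zero.mpr h13)
    linear_combination e1 - e3
  have ha : α = 0 := by
    apply mul_left_cancel₀ (sub_ne_zero.mpr h23)
    linear_combination r12 - r13
  refine ⟨ha, ?_, ?_⟩
  · linear_combination r12 - (t1 + t2) * ha
  · linear_combination e1 - t1^2 * ha - t1 * (r12 - (t1 + t2) * ha)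

lemma affine_three {α β γ : ℝ} {A B C : ℝ × ℝ} (hd : detp A B C ≠ 0)
    (h1 : α * A.1 + β * A.2 + γ = 0) (h2 : α * B.1 + β * B.2 + γ = 0)
    (h3 : α * C.1 + β * C.2 + γ = 0) : α = 0 ∧ β = 0 ∧ γ = 0 := by
  have ha : α = 0 := by
    apply mul_left_cancel₀ hd
    simp only [detp]
    linear_combination (C.2 - A.2) * h2 - (C.2 - A.2) * h1 - (B.2 - A.2) * h3 + (B.2 - A.2) * h1
  have hb : β = 0 := by
    apply mul_left_cancel₀ hd
    simp only [detp]
    linear_combination (A.1 - C.1) * h2 - (A.1 - C.1) * h1 + (B.1 - A.1) * h3 - (B.1 - A.1) * h1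
  exact ⟨ha, hb, by linear_combination h1 - A.1 * ha - A.2 * hb⟩

lemma affine_two {α β γ : ℝ} {C D : ℝ × ℝ} (hCD : C ≠ D)
    (hC : α * C.1 + β * C.2 + γ = 0) (hD : α * D.1 + β * D.2 + γ = 0) :
    ∃ k : ℝ, ∀ p : ℝ × ℝ, α * p.1 + β * p.2 + γ = k * detp C D p := by
  have hrel : α * (D.1 - C.1) + β * (D.2 - C.2) = 0 := by linear_combination hD - hC
  rcases (by
    by_contra h
    push_neg at h
    exact hCD (Prod.ext (by linarith [sub_eq_zero.mp h.1]) (by linarith [sub_eq_zero.mp h.2]))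
    : D.1 - C.1 ≠ 0 ∨ D.2 - C.2 ≠ 0) with h1 | h2
  · refine ⟨β / (D.1 - C.1), fun p => ?_⟩
    rw [div_mul_eq_mul_div, eq_div_iff h1]
    simp only [detp]
    linear_combination (D.1 - C.1) * hC + (p.1 - C.1) * hrel
  · refine ⟨-α / (D.2 - C.2), fun p => ?_⟩
    rw [div_mul_eq_mul_div, eq_div_iff h2]
    simp only [detp]
    linear_combination (D.2 - C.2) * hC + (p.2 - C.2) * hrel

lemma conic_ext {k : Conic} (h : ∀ p : ℝ × ℝ, k.eval p = 0) :
    k.a = 0 ∧ k.b = 0 ∧ k.c = 0 ∧ k.d = 0 ∧ k.e = 0 ∧ k.g = 0 := by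
  have h00 := h (0,0); have h10 := h (1,0); have hm0 := h (-1,0)
  have h01 := h (0,1); have h0m := h (0,-1); have h11 := h (1,1)
  simp [Conic.eval] at h00 h10 hm0 h01 h0m h11
  refine ⟨by linarith, by linarith, by linarith, by linarith, by linarith, by linarith⟩

def lineProd (X Y Z W : ℝ × ℝ) : Conic :=
  ⟨(-(Y.2-X.2)) * (-(W.2-Z.2)),
   (-(Y.2-X.2)) * (W.1-Z.1) + (Y.1-X.1) * (-(W.2-Z.2)),
   (Y.1-X.1) * (W.1-Z.1),
   (-(Y.2-X.2)) * ((W.2-Z.2)*Z.1 - (W.1-Z.1)*Z.2) + ((Y.2-X.2)*X.1 - (Y.1-X.1)*X.2) * (-(W.2-Z.2)),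
   (Y.1-X.1) * ((W.2-Z.2)*Z.1 - (W.1-Z.1)*Z.2) + ((Y.2-X.2)*X.1 - (Y.1-X.1)*X.2) * (W.1-Z.1),
   ((Y.2-X.2)*X.1 - (Y.1-X.1)*X.2) * ((W.2-Z.2)*Z.1 - (W.1-Z.1)*Z.2)⟩

lemma lineProd_eval (X Y Z W : ℝ × ℝ) (p : ℝ × ℝ) :
    (lineProd X Y Z W).eval p = detp X Y p * detp Z W p := by
  simp only [lineProd, Conic.eval, detp]
  ring

def cdiff (f : Conic) (μ : ℝ) (g : Conic) : Conic :=
  ⟨f.a - μ*g.a, f.b - μ*g.b, f.c - μ*g.c, f.d - μ*g.d, f.e - μ*g.e, f.g - μ*g.g⟩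

lemma cdiff_eval (f : Conic) (μ : ℝ) (g : Conic) (p : ℝ × ℝ) :
    (cdiff f μ g).eval p = f.eval p - μ * g.eval p := by
  simp only [cdiff, Conic.eval]; ring

def clin (s : ℝ) (f : Conic) (t : ℝ) (g : Conic) : Conic :=
  ⟨s*f.a + t*g.a, s*f.b + t*g.b, s*f.c + t*g.c, s*f.d + t*g.d, s*f.e + t*g.e, s*f.g + t*g.g⟩

lemma clin_eval (s : ℝ) (f : Conic) (t : ℝ) (g : Conic) (p : ℝ × ℝ) :
    (clin s f t g).eval p = s * f.eval p + t * g.eval p := by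
  simp only [clin, Conic.eval]; ring

lemma span4 {A B C D : ℝ × ℝ} (hAB : A ≠ B) (hCD : C ≠ D)
    (dABC : detp A B C ≠ 0) (dABD : detp A B D ≠ 0)
    (f : Conic) (hfA : f.eval A = 0) (hfB : f.eval B = 0) (hfC : f.eval C = 0) (hfD : f.eval D = 0) :
    ∃ lam mu : ℝ, ∀ p : ℝ × ℝ,
      f.eval p = lam * (detp A B p * detp C D p) + mu * (detp A C p * detp B D p) := by
  set E : ℝ × ℝ := A + (2:ℝ) • (B - A) with hE
  have hE1 : E.1 = A.1 + 2*(B.1 - A.1) := by simp [hE]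
  have hE2 : E.2 = A.2 + 2*(B.2 - A.2) := by simp [hE]
  have hACE : detp A C E = -2 * detp A B C := by simp only [detp, hE1, hE2]; ring
  have hBDE : detp B D E = -(detp A B D) := by simp only [detp, hE1, hE2]; ring
  have hL2E : detp A C E * detp B D E ≠ 0 := by
    rw [hACE, hBDE]
    exact mul_ne_zero (by simpa using dABC) (by simpa using dABD)
  set μ := f.eval E / (detp A C E * detp B D E) with hμ
  set h : Conic := cdiff f μ (lineProd A C B D) with hh
  have heval : ∀ p, h.eval p = f.eval p - μ * (detp A C p * detp B D p) := by
    intro p; rw [hh, cdiff_eval, lineProd_eval]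
  have hhA : h.eval A = 0 := by
    rw [heval]; simp only [detp]; rw [hfA]; ring
  have hhB : h.eval B = 0 := by
    rw [heval]
    have : detp B D B = 0 := by simp [detp]
    rw [hfB, this]; ring
  have hhC : h.eval C = 0 := by
    rw [heval]
    have : detp A C C = 0 := by simp [detp]; ring
    rw [hfC, this]; ring
  have hhD : h.eval D = 0 := by
    rw [heval]
    have : detp B D D = 0 := by simp [detp]; ring
    rw [hfD, this]; ring
  have hhE : h.eval E = 0 := by
    rw [heval, hμ, div_mul_cancel₀ _ hL2E, sub_self]
  -- h vanishes at A, B, E  which are  A + 0•(B-A), A + 1•(B-A), A + 2•(B-A)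
  have hBA : A + (1:ℝ) • (B - A) = B := by apply Prod.ext <;> simp
  have hA0 : A + (0:ℝ) • (B - A) = A := by apply Prod.ext <;> simp
  have e0 : h.qf (B-A) * 0^2 + h.lf A (B-A) * 0 + h.eval A = 0 := by
    simpa using hhA
  have e1 : h.qf (B-A) * 1^2 + h.lf A (B-A) * 1 + h.eval A = 0 := by
    rw [← exp1, hBA]; exact hhB
  have e2 : h.qf (B-A) * 2^2 + h.lf A (B-A) * 2 + h.eval A = 0 := by
    rw [← exp1, ← hE]; exact hhE
  obtain ⟨hq0, hl0, he0⟩ := quad3 (by norm_num) (by norm_num) (by norm_num) e0 e1 e2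
  have hBAne : B - A ≠ 0 := fun hc => hAB (sub_eq_zero.mp hc).symm
  obtain ⟨α, β, γ, hfac⟩ := factor_line h A (B - A) hBAne hq0 hl0 he0
  have hSAB : ∀ p : ℝ × ℝ, (B-A).1 * (p.2 - A.2) - (B-A).2 * (p.1 - A.1) = detp A B p := by
    intro p; simp [detp]
  have hmC : α * C.1 + β * C.2 + γ = 0 := by
    have := hfac C
    rw [hhC, hSAB] at this
    exact (mul_eq_zero.mp this.symm).resolve_left dABC
  have hmD : α * D.1 + β * D.2 + γ = 0 := by
    have := hfac D
    rw [hhD, hSAB] at this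
    exact (mul_eq_zero.mp this.symm).resolve_left dABD
  obtain ⟨k, hk⟩ := affine_two hCD hmC hmD
  refine ⟨k, μ, fun p => ?_⟩
  have h1 := hfac p
  rw [hSAB, hk, heval] at h1
  linarith [h1]

lemma circle3 {O X Y Z : ℝ × ℝ} (hXY : X ≠ Y) (hXZ : X ≠ Z) (hYZ : Y ≠ Z)
    (e1 : (Y.1-O.1)^2+(Y.2-O.2)^2 = (X.1-O.1)^2+(X.2-O.2)^2)
    (e2 : (Z.1-O.1)^2+(Z.2-O.2)^2 = (X.1-O.1)^2+(X.2-O.2)^2) :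
    detp X Y Z ≠ 0 := by
  intro hdet
  have hd : Y - X ≠ 0 := fun hc => hXY (sub_eq_zero.mp hc).symm
  have hn0 := nsq_pos hd
  have hfst : (Y - X).1 = Y.1 - X.1 := rfl
  have hsnd : (Y - X).2 = Y.2 - X.2 := rfl
  rw [hfst, hsnd] at hn0
  set n := (Y.1-X.1)^2 + (Y.2-X.2)^2 with hndef
  have hn : n ≠ 0 := ne_of_gt hn0
  set k := ((Z.1-X.1)*(Y.1-X.1) + (Z.2-X.2)*(Y.2-X.2))/n with hk
  have hZ1 : Z.1 - X.1 = k*(Y.1-X.1) := by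
    rw [hk]; field_simp
    simp only [detp] at hdet
    linear_combination (-(Y.2-X.2))*hdet
  have hZ2 : Z.2 - X.2 = k*(Y.2-X.2) := by
    rw [hk]; field_simp
    simp only [detp] at hdet
    linear_combination (Y.1-X.1)*hdet
  have hkk : k*(k-1)*n = 0 := by
    linear_combination e2 - k*e1 - (2*(X.1-O.1) + (Z.1-X.1) + k*(Y.1-X.1))*hZ1
      - (2*(X.2-O.2) + (Z.2-X.2) + k*(Y.2-X.2))*hZ2
  rcases mul_eq_zero.mp hkk with hk01 | hzero
  · rcases mul_eq_zero.mp hk01 with h0 | h1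
    · exact hXZ (Prod.ext (by rw [h0] at hZ1; linarith) (by rw [h0] at hZ2; linarith)).symm
    · have hk1 : k = 1 := by linarith [sub_eq_zero.mp h1]
      rw [hk1] at hZ1 hZ2
      exact hYZ (Prod.ext (by linarith) (by linarith))
  · exact hn hzero

lemma param_inj {V u : ℝ × ℝ} (hu : u ≠ 0) {t t' : ℝ}
    (h : V + t • u = V + t' • u) : t = t' := by
  have hn := nsq_pos hu
  have h1 : t * u.1 = t' * u.1 := by
    have := congrArg Prod.fst h
    simpa [Prod.fst_add, Prod.smul_fst, smul_eq_mul] using this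
  have h2 : t * u.2 = t' * u.2 := by
    have := congrArg Prod.snd h
    simpa [Prod.snd_add, Prod.smul_snd, smul_eq_mul] using this
  have : (t - t') * (u.1^2 + u.2^2) = 0 := by linear_combination u.1*h1 + u.2*h2
  rcases mul_eq_zero.mp this with h | h
  · linarith [sub_eq_zero.mp h]
  · exact absurd h (ne_of_gt hn)

lemma offline {V u p : ℝ × ℝ} (hu : u ≠ 0) (hp : ∀ t : ℝ, p ≠ V + t • u) :
    u.1*(p.2-V.2) - u.2*(p.1-V.1) ≠ 0 := by
  intro h
  have hn := nsq_pos hu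
  apply hp ((u.1*(p.1-V.1) + u.2*(p.2-V.2))/(u.1^2+u.2^2))
  apply Prod.ext
  · simp only [Prod.fst_add, Prod.smul_fst, smul_eq_mul]
    field_simp
    linear_combination (-u.2)*h
  · simp only [Prod.snd_add, Prod.smul_snd, smul_eq_mul]
    field_simp
    linear_combination u.1*h

set_option maxHeartbeats 2000000 in
/-- **The Johnson–Volenec–Dergiades–Lim generalization of the butterfly theorem.**
Four base points lie on a circle with center `O`, and some conic through them
meets a line `ℓ` in exactly two points `P ≠ Q` equidistant from `O`, with midpoint
`M`. Then every conic through the four base points meets `ℓ` either not at all,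
or exactly at `M`, or exactly in a pair of distinct points whose midpoint is `M`. -/
theorem butterfly_concyclic
    (O : ℝ × ℝ) (r : ℝ) (hr : 0 < r)
    (A B C D : ℝ × ℝ)
    (hAB : A ≠ B) (hAC : A ≠ C) (hAD : A ≠ D)
    (hBC : B ≠ C) (hBD : B ≠ D) (hCD : C ≠ D)
    (hA : OnCircle A O r) (hB : OnCircle B O r)
    (hC : OnCircle C O r) (hD : OnCircle D O r)
    (V u : ℝ × ℝ) (hu : u ≠ 0)
    (hAl : A ∉ parmLine V u) (hBl : B ∉ parmLine V u)
    (hCl : C ∉ parmLine V u) (hDl : D ∉ parmLine V u)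
    (G : Conic) (hG0 : G.Nonzero) (hG : G.Through A B C D)
    (hGcirc : ¬ G.PropTo (circleConic O r))
    (P Q : ℝ × ℝ) (hPQ : P ≠ Q)
    (hGl : {p ∈ parmLine V u | G.eval p = 0} = {P, Q})
    (hdist : (P.1 - O.1) ^ 2 + (P.2 - O.2) ^ 2 = (Q.1 - O.1) ^ 2 + (Q.2 - O.2) ^ 2)
    (M : ℝ × ℝ) (hM : M = midpoint ℝ P Q) :
    ∀ f : Conic, f.Nonzero → f.Through A B C D →
      {p ∈ parmLine V u | f.eval p = 0} = ∅ ∨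
      {p ∈ parmLine V u | f.eval p = 0} = {M} ∨
      ∃ X Y : ℝ × ℝ, X ≠ Y ∧ M = midpoint ℝ X Y ∧
        {p ∈ parmLine V u | f.eval p = 0} = {X, Y} := by
  intro f hf0 hfT
  obtain ⟨hfA, hfB, hfC, hfD⟩ := hfT
  obtain ⟨hGA, hGB, hGC, hGD⟩ := hG
  have hA' : (A.1 - O.1)^2 + (A.2 - O.2)^2 = r^2 := hA
  have hB' : (B.1 - O.1)^2 + (B.2 - O.2)^2 = r^2 := hB
  have hC' : (C.1 - O.1)^2 + (C.2 - O.2)^2 = r^2 := hC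
  have hD' : (D.1 - O.1)^2 + (D.2 - O.2)^2 = r^2 := hD
  -- the circle as a conic
  set S : Conic := circleConic O r with hSdef
  have hSA : S.eval A = 0 := by
    simp only [hSdef, circleConic, Conic.eval]; linear_combination hA'
  have hSB : S.eval B = 0 := by
    simp only [hSdef, circleConic, Conic.eval]; linear_combination hB'
  have hSC : S.eval C = 0 := by
    simp only [hSdef, circleConic, Conic.eval]; linear_combination hC'
  have hSD : S.eval D = 0 := by
    simp only [hSdef, circleConic, Conic.eval]; linear_combination hD'
  -- no three collinear (dets)
  have dABC : detp A B C ≠ 0 := circle3 hAB hAC hBC (hB'.trans hA'.symm) (hC'.trans hA'.symm)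
  have dABD : detp A B D ≠ 0 := circle3 hAB hAD hBD (hB'.trans hA'.symm) (hD'.trans hA'.symm)
  -- P and Q on the line
  have hPmem : P ∈ {p ∈ parmLine V u | G.eval p = 0} := by
    rw [hGl]; exact Set.mem_insert _ _
  have hQmem : Q ∈ {p ∈ parmLine V u | G.eval p = 0} := by
    rw [hGl]; exact Set.mem_insert_iff.mpr (Or.inr rfl)
  obtain ⟨⟨tP, hP⟩, hGP⟩ := hPmem
  obtain ⟨⟨tQ, hQ⟩, hGQ⟩ := hQmem
  have htPQ : tP ≠ tQ := by
    intro h; exact hPQ (by rw [hP, hQ, h])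
  -- pencils
  obtain ⟨lam, mu, hfeq⟩ := span4 hAB hCD dABC dABD f hfA hfB hfC hfD
  obtain ⟨lamS, muS, hSeq⟩ := span4 hAB hCD dABC dABD S hSA hSB hSC hSD
  obtain ⟨lamG, muG, hGeq⟩ := span4 hAB hCD dABC dABD G hGA hGB hGC hGD
  set l1 : Conic := lineProd A B C D with hl1
  set l2 : Conic := lineProd A C B D with hl2
  have coefs : ∀ (k : Conic) (la m : ℝ),
      (∀ p : ℝ × ℝ, k.eval p = la * (detp A B p * detp C D p) + m * (detp A C p * detp B D p)) →
      k.qf u = la * l1.qf u + m * l2.qf u ∧ k.lf V u = la * l1.lf V u + m * l2.lf V u ∧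
        k.eval V = la * l1.eval V + m * l2.eval V := by
    intro k la m hkeq
    have hv : ∀ t : ℝ, (k.qf u - la*l1.qf u - m*l2.qf u) * t^2
        + (k.lf V u - la*l1.lf V u - m*l2.lf V u) * t
        + (k.eval V - la*l1.eval V - m*l2.eval V) = 0 := by
      intro t
      have h1 := hkeq (V + t • u)
      rw [← lineProd_eval A B C D, ← lineProd_eval A C B D, ← hl1, ← hl2] at h1
      rw [exp1 k, exp1 l1, exp1 l2] at h1
      linear_combination h1
    obtain ⟨x, y, z⟩ := quad3 (t1 := 0) (t2 := 1) (t3 := -1)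
      (by norm_num) (by norm_num) (by norm_num) (hv 0) (hv 1) (hv (-1))
    exact ⟨by linarith only [x], by linarith only [y], by linarith only [z]⟩
  obtain ⟨haf, hbf, hcf⟩ := coefs f lam mu hfeq
  obtain ⟨haS, hbS, hcS⟩ := coefs S lamS muS hSeq
  obtain ⟨haG, hbG, hcG⟩ := coefs G lamG muG hGeq
  -- symmetric relations for S and G
  have hSPQ : S.eval P = S.eval Q := by
    simp only [hSdef, circleConic, Conic.eval]; linear_combination hdist
  rw [hP, hQ, exp1, exp1] at hSPQ
  have hSrel : S.qf u * (tP + tQ) + S.lf V u = 0 := by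
    apply mul_left_cancel₀ (sub_ne_zero.mpr htPQ)
    linear_combination hSPQ
  rw [hP, exp1] at hGP
  rw [hQ, exp1] at hGQ
  have hGrel : G.qf u * (tP + tQ) + G.lf V u = 0 := by
    apply mul_left_cancel₀ (sub_ne_zero.mpr htPQ)
    linear_combination hGP - hGQ
  -- Δ ≠ 0
  have hDelta : lamS * muG - lamG * muS ≠ 0 := by
    intro hΔ
    have hk0 : ∀ p : ℝ × ℝ, (clin muG S (-muS) G).eval p = 0 := by
      intro p
      rw [clin_eval, hSeq p, hGeq p]
      linear_combination (detp A B p * detp C D p) * hΔ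
    obtain ⟨c1, c2, c3, c4, c5, c6⟩ := conic_ext hk0
    simp only [clin] at c1 c2 c3 c4 c5 c6
    rcases eq_or_ne muS 0 with hmuS | hmuS
    · rcases eq_or_ne muG 0 with hmuG | hmuG
      · -- both mu are zero
        have hlamS : lamS ≠ 0 := by
          intro hlamS
          have hz : ∀ p : ℝ × ℝ, S.eval p = 0 := by
            intro p; rw [hSeq p, hlamS, hmuS]; ring
          have hSa := (conic_ext hz).1
          have hSa1 : S.a = 1 := rfl
          rw [hSa1] at hSa
          norm_num at hSa
        have hk1 : ∀ p : ℝ × ℝ, (clin lamS G (-lamG) S).eval p = 0 := by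
          intro p
          rw [clin_eval, hSeq p, hGeq p, hmuS, hmuG]
          ring
        obtain ⟨d1, d2, d3, d4, d5, d6⟩ := conic_ext hk1
        simp only [clin] at d1 d2 d3 d4 d5 d6
        refine hGcirc ⟨lamG/lamS, ?_, ?_, ?_, ?_, ?_, ?_⟩
        · rw [eq_comm, div_mul_eq_mul_div, div_eq_iff hlamS]; linarith only [d1]
        · rw [eq_comm, div_mul_eq_mul_div, div_eq_iff hlamS]; linarith only [d2]
        · rw [eq_comm, div_mul_eq_mul_div, div_eq_iff hlamS]; linarith only [d3]
        · rw [eq_comm, div_mul_eq_mul_div, div_eq_iff hlamS]; linarith only [d4]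
        · rw [eq_comm, div_mul_eq_mul_div, div_eq_iff hlamS]; linarith only [d5]
        · rw [eq_comm, div_mul_eq_mul_div, div_eq_iff hlamS]; linarith only [d6]
      · rw [hmuS] at c1
        have hSa1 : S.a = 1 := rfl
        rw [hSa1] at c1
        exact hmuG (by linarith only [c1])
    · refine hGcirc ⟨muG/muS, ?_, ?_, ?_, ?_, ?_, ?_⟩
      · rw [eq_comm, div_mul_eq_mul_div, div_eq_iff hmuS]; linarith only [c1]
      · rw [eq_comm, div_mul_eq_mul_div, div_eq_iff hmuS]; linarith only [c2]
      · rw [eq_comm, div_mul_eq_mul_div, div_eq_iff hmuS]; linarith only [c3]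
      · rw [eq_comm, div_mul_eq_mul_div, div_eq_iff hmuS]; linarith only [c4]
      · rw [eq_comm, div_mul_eq_mul_div, div_eq_iff hmuS]; linarith only [c5]
      · rw [eq_comm, div_mul_eq_mul_div, div_eq_iff hmuS]; linarith only [c6]
  -- symmetry relation for f
  have key1 : l1.qf u * (tP + tQ) + l1.lf V u = 0 := by
    apply mul_left_cancel₀ hDelta
    linear_combination muG*hSrel - muS*hGrel - (tP+tQ)*muG*haS + (tP+tQ)*muS*haG
      - muG*hbS + muS*hbG
  have key2 : l2.qf u * (tP + tQ) + l2.lf V u = 0 := by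
    apply mul_left_cancel₀ hDelta
    linear_combination -lamG*hSrel + lamS*hGrel + (tP+tQ)*lamG*haS - (tP+tQ)*lamS*haG
      + lamG*hbS - lamS*hbG
  have hfrel : f.qf u * (tP + tQ) + f.lf V u = 0 := by
    linear_combination (tP+tQ)*haf + hbf + lam*key1 + mu*key2
  -- midpoint
  obtain ⟨tM, htM⟩ : ∃ tM : ℝ, tM = (tP + tQ)/2 := ⟨_, rfl⟩
  have hMV : M = V + tM • u := by
    rw [hM, hP, hQ, htM, midpoint_eq_smul_add]
    apply Prod.ext <;>
      (simp only [Prod.fst_add, Prod.snd_add, Prod.smul_fst, Prod.smul_snd, smul_eq_mul, invOf_eq_inv] <;>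
        field_simp <;> ring)
  rcases eq_or_ne (f.qf u) 0 with haf0 | haf0
  · have hbf0 : f.lf V u = 0 := by
      rw [haf0] at hfrel; linarith only [hfrel]
    rcases eq_or_ne (f.eval V) 0 with hcf0 | hcf0
    · -- f vanishes on the whole line: contradiction
      exfalso
      obtain ⟨α, β, γ, hfac⟩ := factor_line f V u hu haf0 hbf0 hcf0
      have hoff : ∀ p : ℝ × ℝ, p ∉ parmLine V u → f.eval p = 0 →
          α * p.1 + β * p.2 + γ = 0 := by
        intro p hpl hpe
        have hS0 : u.1*(p.2-V.2) - u.2*(p.1-V.1) ≠ 0 :=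
          offline hu (fun t ht => hpl ⟨t, ht⟩)
        have hfp := hfac p
        rw [hpe] at hfp
        exact (mul_eq_zero.mp hfp.symm).resolve_left hS0
      obtain ⟨hα, hβ, hγ⟩ := affine_three dABC (hoff A hAl hfA) (hoff B hBl hfB) (hoff C hCl hfC)
      apply hf0
      apply conic_ext
      intro p
      rw [hfac p, hα, hβ, hγ]
      ring
    · -- empty intersection
      left
      rw [Set.eq_empty_iff_forall_notMem]
      rintro p ⟨⟨t, rfl⟩, hev⟩
      rw [exp1, haf0, hbf0] at hev
      simp at hev
      exact hcf0 hev
  · -- quadratic case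
    have hbf' : f.lf V u = -(f.qf u * (2*tM)) := by
      rw [htM]; field_simp; linarith only [hfrel]
    obtain ⟨r2, hr2⟩ : ∃ r2 : ℝ, r2 = tM^2 - f.eval V / f.qf u := ⟨_, rfl⟩
    have hqr2 : f.qf u * r2 = f.qf u * tM^2 - f.eval V := by
      rw [hr2]; field_simp
    have hq : ∀ t : ℝ, f.eval (V + t • u) = f.qf u * ((t - tM)^2 - r2) := by
      intro t
      rw [exp1, hbf']
      linear_combination hqr2
    rcases lt_trichotomy r2 0 with hr2s | hr2s | hr2s
    · left
      rw [Set.eq_empty_iff_forall_notMem]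
      rintro p ⟨⟨t, rfl⟩, hev⟩
      rw [hq t] at hev
      have hpos : (t - tM)^2 - r2 > 0 := by
        have hsq := sq_nonneg (t - tM)
        linarith only [hsq, hr2s]
      exact (mul_ne_zero haf0 (ne_of_gt hpos)) hev
    · right; left
      ext p
      simp only [Set.mem_setOf_eq, Set.mem_singleton_iff]
      constructor
      · rintro ⟨⟨t, rfl⟩, hev⟩
        rw [hq t] at hev
        have hz : (t - tM)^2 - r2 = 0 := (mul_eq_zero.mp hev).resolve_left haf0
        have ht : t = tM := by
          rw [hr2s] at hz
          have h2 : (t - tM)^2 = 0 := by linarith only [hz]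
          have h3 := sq_eq_zero_iff.mp h2
          linarith only [h3]
        rw [ht, hMV]
      · rintro rfl
        refine ⟨⟨tM, hMV⟩, ?_⟩
        rw [hMV, hq tM]
        rw [show (tM - tM)^2 - r2 = 0 from by rw [hr2s]; ring]
        ring
    · right; right
      obtain ⟨e, he⟩ : ∃ e : ℝ, e = Real.sqrt r2 := ⟨_, rfl⟩
      have he2 : e^2 = r2 := by rw [he]; exact Real.sq_sqrt hr2s.le
      have he0 : 0 < e := by rw [he]; exact Real.sqrt_pos.mpr hr2s
      refine ⟨V + (tM - e) • u, V + (tM + e) • u, ?_, ?_, ?_⟩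
      · intro hXY
        have htt := param_inj hu hXY
        linarith only [htt, he0]
      · rw [hMV, midpoint_eq_smul_add]
        apply Prod.ext <;>
          (simp only [Prod.fst_add, Prod.snd_add, Prod.smul_fst, Prod.smul_snd, smul_eq_mul, invOf_eq_inv] <;>
            field_simp <;> ring)
      · ext p
        simp only [Set.mem_setOf_eq, Set.mem_insert_iff, Set.mem_singleton_iff]
        constructor
        · rintro ⟨⟨t, rfl⟩, hev⟩
          rw [hq t] at hev
          have h0 : (t - tM)^2 - r2 = 0 := (mul_eq_zero.mp hev).resolve_left haf0
          have hfact : (t - (tM - e)) * (t - (tM + e)) = 0 := by linear_combination h0 - he2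
          rcases mul_eq_zero.mp hfact with h | h
          · left; rw [show t = tM - e from by linarith only [sub_eq_zero.mp h]]
          · right; rw [show t = tM + e from by linarith only [sub_eq_zero.mp h]]
        · rintro (rfl | rfl)
          · refine ⟨⟨tM - e, rfl⟩, ?_⟩
            rw [hq]
            rw [show (tM - e - tM)^2 - r2 = 0 from by rw [← he2]; ring]
            ring
          · refine ⟨⟨tM + e, rfl⟩, ?_⟩
            rw [hq]
            rw [show (tM + e - tM)^2 - r2 = 0 from by rw [← he2]; ring]
            ring
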